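/- (Sharpness in the univariate case.) In the setting of the univariate interval type local limit theorem, if the sequence (mₙ) of positive minimal lengths does NOT satisfy mₙ/wₙ → ∞ (i.e. there is C ≥ 0 and infinitely many n with mₙ/wₙ ≤ C), and the grid points of Gₙ are eventually dense enough that [a,b] contains at least ⌈C⌉+1 consecutive grid points, then the convergence sup_{I⊆[a,b], |I|≥mₙ} |μₙ(I)/μ(I) − 1| → 0 fails: there exist β < 1 and intervals Iₙ ⊆ [a,b] with |Iₙ| ≥ mₙ and μₙ(Iₙ)/μ(Iₙ) ≤ β along a subsequence. -/

import Mathlib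

open MeasureTheory Filter Topology

set_option maxHeartbeats 1000000 in
/-- Sharpness in the univariate case: if `mₙ/wₙ` does not tend to infinity, i.e. there
are `C ≥ 0` and infinitely many `n` with `mₙ/wₙ ≤ C`, and `[a,b]` eventually contains
`⌈C⌉+1` consecutive grid points of `Gₙ`, then the interval type local limit theorem fails:
there are `β < 1` and intervals `Iₙ ⊆ [a,b]` with `|Iₙ| ≥ mₙ` and `μₙ(Iₙ)/μ(Iₙ) ≤ β`
along a subsequence. -/
theorem stmt_8 (v w : ℕ → ℝ) (hw : ∀ n, 0 < w n) (hw0 : Tendsto w atTop (𝓝 0))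
    (μn : ℕ → Measure ℝ) [∀ n, IsProbabilityMeasure (μn n)]
    (hsupp : ∀ n, (μn n) {x : ℝ | ∃ k : ℤ, x = v n + w n * k}ᶜ = 0)
    (f : ℝ → ℝ) (hf_cont : Continuous f) (hf_nonneg : ∀ x, 0 ≤ f x)
    (hf_int : Integrable f) (hf_one : ∫ x, f x = 1)
    (a b c : ℝ) (hab : a < b) (hc : 0 < c) (hfc : ∀ x ∈ Set.Icc a b, c ≤ f x)
    (hLLT : ∀ ε > 0, ∃ N : ℕ, ∀ n ≥ N, ∀ k : ℤ,
      |((μn n) {v n + w n * (k : ℝ)}).toReal / w n - f (v n + w n * (k : ℝ))| < ε)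
    (m : ℕ → ℝ) (hm : ∀ n, 0 < m n)
    (C : ℝ) (hC : 0 ≤ C) (hfreq : ∃ᶠ n in atTop, m n / w n ≤ C)
    (hdense : ∀ᶠ n in atTop, ∃ k : ℤ, ∀ j : ℕ, j ≤ ⌈C⌉₊ →
      v n + w n * ((k : ℝ) + j) ∈ Set.Icc a b) :
    ∃ β : ℝ, β < 1 ∧ ∃ᶠ n in atTop, ∃ I : Set ℝ, I ⊆ Set.Icc a b ∧ I.OrdConnected ∧
      MeasurableSet I ∧ ENNReal.ofReal (m n) ≤ volume I ∧
      ((μn n) I).toReal / (∫ x in I, f x) ≤ β := by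
  rcases eq_or_lt_of_le hC with hC0 | hCpos
  · exfalso
    obtain ⟨n, hn⟩ := hfreq.exists
    have : 0 < m n / w n := div_pos (hm n) (hw n)
    rw [← hC0] at hn; linarith
  set N : ℕ := ⌈C⌉₊ with hNdef
  have hN1 : 1 ≤ N := Nat.one_le_ceil_iff.mpr hCpos
  have hNR : (1:ℝ) ≤ (N:ℝ) := by exact_mod_cast hN1
  have hNpos : (0:ℝ) < (N:ℝ) := by linarith
  set d : ℝ := c / (8 * N) with hd
  have hdpos : 0 < d := by positivity
  have hNne : (N:ℝ) ≠ 0 := ne_of_gt hNpos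
  have hNd : (N:ℝ) * d = c / 8 := by
    rw [hd]; field_simp
  -- uniform continuity on [a,b]
  obtain ⟨δ, hδpos, hδ⟩ : ∃ δ > 0, ∀ x ∈ Set.Icc a b, ∀ y ∈ Set.Icc a b,
      dist x y ≤ δ → dist (f x) (f y) ≤ d := by
    have h1 : UniformContinuousOn f (Set.Icc a b) :=
      isCompact_Icc.uniformContinuousOn_of_continuous hf_cont.continuousOn
    exact Metric.uniformContinuousOn_iff_le.mp h1 d hdpos
  obtain ⟨N₀, hN₀⟩ := hLLT d hdpos
  have hev1 : ∀ᶠ n in atTop, ∀ k : ℤ,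
      |((μn n) {v n + w n * (k : ℝ)}).toReal / w n - f (v n + w n * (k : ℝ))| < d :=
    eventually_atTop.2 ⟨N₀, hN₀⟩
  have hev2 : ∀ᶠ n in atTop, w n * N ≤ δ := by
    have h2 : ∀ᶠ n in atTop, w n < δ / N := hw0.eventually_lt_const (by positivity)
    filter_upwards [h2] with n h
    rw [← le_div_iff₀ hNpos]; exact h.le
  have hβlt : 1 - 1/(2*(N:ℝ)) < 1 := by
    have : 0 < 1/(2*(N:ℝ)) := by positivity
    linarith
  refine ⟨1 - 1/(2*(N:ℝ)), hβlt, ?_⟩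
  refine (hfreq.and_eventually (hdense.and (hev1.and hev2))).mono ?_
  rintro n ⟨hmn, ⟨k, hk⟩, hllt, hwδ⟩
  set g : ℕ → ℝ := fun j => v n + w n * ((k:ℝ) + j) with hg
  have hgmem : ∀ j : ℕ, j ≤ N → g j ∈ Set.Icc a b := fun j hj => hk j hj
  have hg0 : g 0 ∈ Set.Icc a b := hgmem 0 (Nat.zero_le _)
  have hgN : g N ∈ Set.Icc a b := hgmem N le_rfl
  have hgNdiff : g N - g 0 = w n * N := by simp [hg]; ring
  set I : Set ℝ := Set.Ioo (g 0) (g N) with hI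
  have hIsub : I ⊆ Set.Icc a b := fun x hx =>
    ⟨le_trans hg0.1 hx.1.le, le_trans hx.2.le hgN.2⟩
  -- volume bound
  have hmC : m n ≤ w n * N := by
    have h1 : m n ≤ C * w n := (div_le_iff₀ (hw n)).mp hmn
    have h2 : C ≤ (N:ℝ) := Nat.le_ceil C
    nlinarith [hw n]
  have hvol : ENNReal.ofReal (m n) ≤ volume I := by
    rw [hI, Real.volume_Ioo, hgNdiff]
    exact ENNReal.ofReal_le_ofReal hmC
  -- grid points of I
  set G : Set ℝ := {x : ℝ | ∃ k : ℤ, x = v n + w n * k} with hG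
  set S : Finset ℝ := (Finset.Ico 1 N).image g with hS
  have hIG : I ∩ G ⊆ ↑S := by
    rintro x ⟨hxI, k', hk'⟩
    have hx1 : g 0 < x := hxI.1
    have hx2 : x < g N := hxI.2
    rw [hk'] at hx1 hx2
    have e0 : g 0 = v n + w n * (k:ℝ) := by simp [hg]
    have h1 : (k:ℝ) < (k':ℝ) := by
      rw [e0] at hx1
      exact lt_of_mul_lt_mul_left (by linarith) (hw n).le
    have h2 : (k':ℝ) < (k:ℝ) + N := by
      have : w n * (k':ℝ) < w n * ((k:ℝ) + N) := by
        simp only [hg] at hx2; linarith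
      exact lt_of_mul_lt_mul_left this (hw n).le
    have h1' : k < k' := by exact_mod_cast h1
    have h2' : k' < k + (N:ℤ) := by exact_mod_cast h2
    set j : ℕ := (k' - k).toNat with hj
    have hjk : ((j:ℤ) : ℝ) = (k':ℝ) - (k:ℝ) := by
      have : (j:ℤ) = k' - k := Int.toNat_of_nonneg (by omega)
      rw [this]; push_cast; ring
    have hj1 : 1 ≤ j := by omega
    have hj2 : j < N := by omega
    have hxg : x = g j := by
      rw [hk', hg]
      push_cast at hjk ⊢
      rw [hjk]; ring
    simp only [hS, Finset.coe_image, Set.mem_image, Finset.mem_coe, Finset.mem_Ico]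
    exact ⟨j, ⟨hj1, hj2⟩, hxg.symm⟩
  -- measure bound on I
  have hμI : (μn n) I ≤ ∑ j ∈ Finset.Ico 1 N, (μn n) {g j} := by
    have h1 : (μn n) I ≤ (μn n) (I ∩ G) + (μn n) (I \ G) :=
      measure_le_inter_add_diff _ _ _
    have h2 : (μn n) (I \ G) = 0 :=
      measure_mono_null (fun x hx => hx.2) (hsupp n)
    have h3 : (μn n) (I ∩ G) ≤ (μn n) ↑S := measure_mono hIG
    have h4 : (μn n) ↑S ≤ ∑ j ∈ Finset.Ico 1 N, (μn n) {g j} := by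
      have : (↑S : Set ℝ) ⊆ ⋃ j ∈ Finset.Ico 1 N, {g j} := by
        intro x hx
        simp only [hS, Finset.coe_image, Set.mem_image, Finset.mem_coe] at hx
        obtain ⟨j, hj, rfl⟩ := hx
        exact Set.mem_biUnion hj rfl
      exact le_trans (measure_mono this) (measure_biUnion_finset_le _ _)
    calc (μn n) I ≤ (μn n) (I ∩ G) + (μn n) (I \ G) := h1
      _ = (μn n) (I ∩ G) := by rw [h2, add_zero]
      _ ≤ _ := le_trans h3 h4
  -- pointwise mass bounds
  have hmass : ∀ j : ℕ, j < N → ((μn n) {g j}).toReal ≤ w n * (f (g 0) + 2 * d) := by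
    intro j hj
    have hcast : g j = v n + w n * ((k + j : ℤ) : ℝ) := by
      rw [hg]; push_cast; ring
    have h1 := hllt (k + j)
    rw [← hcast] at h1
    have h2 : ((μn n) {g j}).toReal / w n < f (g j) + d := by
      have := abs_lt.mp h1
      linarith [this.1, this.2]
    have h3 : ((μn n) {g j}).toReal < w n * (f (g j) + d) := by
      rw [div_lt_iff₀ (hw n)] at h2
      linarith [h2]
    have h4 : f (g j) ≤ f (g 0) + d := by
      have hdist : dist (g j) (g 0) ≤ δ := by
        have habs : g j - g 0 = w n * j := by simp [hg]; ring
        rw [Real.dist_eq, habs, abs_of_nonneg (mul_nonneg (hw n).le (Nat.cast_nonneg _))]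
        calc w n * (j:ℝ) ≤ w n * (N:ℝ) := by
              apply mul_le_mul_of_nonneg_left _ (hw n).le
              exact_mod_cast hj.le
          _ ≤ δ := hwδ
      have := hδ (g j) (hgmem j hj.le) (g 0) hg0 hdist
      rw [Real.dist_eq] at this
      have := abs_le.mp this
      linarith [this.1, this.2]
    nlinarith [hw n]
  -- total measure bound (real)
  have hμIreal : ((μn n) I).toReal ≤ ((N:ℝ) - 1) * (w n * (f (g 0) + 2 * d)) := by
    have hfin : ∀ j ∈ Finset.Ico 1 N, (μn n) {g j} ≠ ⊤ := fun j _ => measure_ne_top _ _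
    have hsfin : (∑ j ∈ Finset.Ico 1 N, (μn n) {g j}) ≠ ⊤ :=
      ENNReal.sum_ne_top.mpr hfin
    have h1 : ((μn n) I).toReal ≤ (∑ j ∈ Finset.Ico 1 N, (μn n) {g j}).toReal :=
      ENNReal.toReal_mono hsfin hμI
    rw [ENNReal.toReal_sum hfin] at h1
    have h2 : ∑ j ∈ Finset.Ico 1 N, ((μn n) {g j}).toReal
        ≤ ∑ j ∈ Finset.Ico 1 N, w n * (f (g 0) + 2 * d) := by
      apply Finset.sum_le_sum
      intro j hj
      exact hmass j (Finset.mem_Ico.mp hj).2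
    rw [Finset.sum_const, Nat.card_Ico] at h2
    have hcard : ((N - 1 : ℕ) : ℝ) = (N:ℝ) - 1 := by
      rw [Nat.cast_sub hN1]; simp
    rw [nsmul_eq_mul, hcard] at h2
    linarith
  -- lower bound on the integral
  have hF : c ≤ f (g 0) := hfc _ hg0
  have hlow : ∀ x ∈ I, f (g 0) - d ≤ f x := by
    intro x hx
    have hdist : dist x (g 0) ≤ δ := by
      rw [Real.dist_eq, abs_of_nonneg (by linarith [hx.1])]
      have : x - g 0 ≤ g N - g 0 := by linarith [hx.2]
      rw [hgNdiff] at this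
      linarith
    have := hδ x (hIsub hx) (g 0) hg0 hdist
    rw [Real.dist_eq] at this
    have := abs_le.mp this
    linarith [this.1, this.2]
  have hint : (f (g 0) - d) * (w n * N) ≤ ∫ x in I, f x := by
    have h1 : ∫ x in I, (f (g 0) - d) ≤ ∫ x in I, f x := by
      apply setIntegral_mono_on
      · exact integrableOn_const (by rw [hI, Real.volume_Ioo]; exact ENNReal.ofReal_ne_top)

      · exact hf_int.integrableOn
      · exact measurableSet_Ioo
      · exact hlow
    have hnn : (0:ℝ) ≤ g N - g 0 := by rw [hgNdiff]; exact mul_nonneg (hw n).le (Nat.cast_nonneg _)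
    rw [setIntegral_const, hI, Real.volume_real_Ioo_of_le (by linarith),
      hgNdiff, smul_eq_mul] at h1
    linarith [h1]
  have hdc : d < c := by
    rw [hd]
    rw [div_lt_iff₀ (by positivity)]
    nlinarith
  have hintpos : 0 < ∫ x in I, f x := by
    have : 0 < (f (g 0) - d) * (w n * N) := by
      exact mul_pos (by linarith) (mul_pos (hw n) hNpos)
    linarith
  refine ⟨I, hIsub, Set.ordConnected_Ioo, measurableSet_Ioo, hvol, ?_⟩
  rw [div_le_iff₀ hintpos]
  have hβpos : (0:ℝ) ≤ 1 - 1/(2*(N:ℝ)) := by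
    have : 1/(2*(N:ℝ)) ≤ 1/2 := by
      apply div_le_div_of_nonneg_left (by norm_num) (by norm_num) (by linarith)
    linarith
  have key : ((N:ℝ) - 1) * (w n * (f (g 0) + 2 * d))
      ≤ (1 - 1/(2*(N:ℝ))) * ((f (g 0) - d) * (w n * N)) := by
    have hN2 : (N:ℝ) * (1 - 1/(2*(N:ℝ))) = (N:ℝ) - 1/2 := by
      field_simp
    have hexp : (1 - 1/(2*(N:ℝ))) * ((f (g 0) - d) * (w n * N))
        = w n * (((N:ℝ) - 1/2) * (f (g 0) - d)) := by
      rw [← hN2]; ring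
    rw [hexp]
    have hmain : ((N:ℝ) - 1) * (f (g 0) + 2 * d) ≤ ((N:ℝ) - 1/2) * (f (g 0) - d) := by
      nlinarith [hNd, hF, hdpos, hc]
    calc ((N:ℝ) - 1) * (w n * (f (g 0) + 2 * d))
        = w n * (((N:ℝ) - 1) * (f (g 0) + 2 * d)) := by ring
      _ ≤ w n * (((N:ℝ) - 1/2) * (f (g 0) - d)) :=
          mul_le_mul_of_nonneg_left hmain (hw n).le
  calc ((μn n) I).toReal ≤ ((N:ℝ) - 1) * (w n * (f (g 0) + 2 * d)) := hμIreal
    _ ≤ (1 - 1/(2*(N:ℝ))) * ((f (g 0) - d) * (w n * N)) := key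
    _ ≤ (1 - 1/(2*(N:ℝ))) * ∫ x in I, f x := by
        apply mul_le_mul_of_nonneg_left hint hβpos
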